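/- Let p(t) and q(t) be real polynomials with nonnegative coefficients, each having a logarithmically concave sequence of coefficients with no internal zeros. Then the coefficient sequence of the product p(t)q(t) is also logarithmically concave. -/
import Mathlib

open Finset

lemma sum_eq_of_support' {α : Type*} (g : α → ℝ) (W T1 T2 : Finset α)
    (h1 : W ⊆ T1) (h2 : W ⊆ T2) (hg : ∀ n, n ∉ W → g n = 0) :
    ∑ i ∈ T1, g i = ∑ i ∈ T2, g i := by
  rw [← Finset.sum_subset h1 (fun x _ hx => hg x hx),
      Finset.sum_subset h2 (fun x _ hx => hg x hx)]

lemma natKey (c : ℕ → ℝ) (h0 : ∀ j, 0 ≤ c j)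
    (hlc : ∀ j : ℕ, 1 ≤ j → c (j - 1) * c (j + 1) ≤ (c j) ^ 2)
    (hniz : ∀ i j k : ℕ, i ≤ j → j ≤ k → 0 < c i → 0 < c k → 0 < c j) :
    ∀ d i : ℕ, 0 < c i → 0 < c (i + d + 2) →
      c i * c (i + d + 2) ≤ c (i + 1) * c (i + d + 1) := by
  intro d
  induction d with
  | zero =>
    intro i h1 h2
    have h := hlc (i + 1) (by omega)
    simp only [Nat.add_sub_cancel] at h
    have e : i + 1 + 1 = i + 0 + 2 := by omega
    rw [e] at h
    have e2 : i + 0 + 1 = i + 1 := by omega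
    rw [e2]
    nlinarith [h]
  | succ d ih =>
    intro i h1 h3
    have e3 : i + (d + 1) + 2 = i + d + 3 := by omega
    rw [e3] at h3 ⊢
    have e4 : i + (d + 1) + 1 = i + d + 2 := by omega
    rw [e4]
    have h2 : 0 < c (i + d + 2) :=
      hniz i (i + d + 2) (i + d + 3) (by omega) (by omega) h1 h3
    have key := ih i h1 h2
    have hlc' := hlc (i + d + 2) (by omega)
    rw [show i + d + 2 - 1 = i + d + 1 from by omega,
        show i + d + 2 + 1 = i + d + 3 from by omega] at hlc'
    have hE := h0 (i + d + 3)
    have hB := h0 (i + 1)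
    have t1 : c i * c (i + d + 2) * c (i + d + 3)
        ≤ c (i + 1) * c (i + d + 1) * c (i + d + 3) :=
      mul_le_mul_of_nonneg_right key hE
    have t2 : c (i + 1) * (c (i + d + 1) * c (i + d + 3))
        ≤ c (i + 1) * (c (i + d + 2)) ^ 2 :=
      mul_le_mul_of_nonneg_left hlc' hB
    have t3 : c i * c (i + d + 3) * c (i + d + 2)
        ≤ c (i + 1) * c (i + d + 2) * c (i + d + 2) := by nlinarith [t1, t2]
    exact le_of_mul_le_mul_right t3 h2

lemma intKey (c : ℕ → ℝ) (h0 : ∀ j, 0 ≤ c j)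
    (hlc : ∀ j : ℕ, 1 ≤ j → c (j - 1) * c (j + 1) ≤ (c j) ^ 2)
    (hniz : ∀ i j k : ℕ, i ≤ j → j ≤ k → 0 < c i → 0 < c k → 0 < c j)
    (i k : ℤ) (hik : i ≤ k) :
    (if 0 ≤ i - 1 then c (i - 1).toNat else 0) *
      (if 0 ≤ k + 1 then c (k + 1).toNat else 0)
    ≤ (if 0 ≤ i then c i.toNat else 0) * (if 0 ≤ k then c k.toNat else 0) := by
  have hA0 : ∀ n : ℤ, 0 ≤ (if 0 ≤ n then c n.toNat else 0) := by
    intro n; split <;> [exact h0 _; exact le_refl 0]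
  by_cases hI : (if 0 ≤ i - 1 then c (i - 1).toNat else 0) = 0
  · rw [hI, zero_mul]; exact mul_nonneg (hA0 _) (hA0 _)
  by_cases hK : (if 0 ≤ k + 1 then c (k + 1).toNat else 0) = 0
  · rw [hK, mul_zero]; exact mul_nonneg (hA0 _) (hA0 _)
  have hi1 : 0 ≤ i - 1 := by
    by_contra h; rw [if_neg h] at hI; exact hI rfl
  have hk1 : 0 ≤ k + 1 := by omega
  rw [if_pos hi1] at hI ⊢
  rw [if_pos hk1] at hK ⊢
  rw [if_pos (show (0:ℤ) ≤ i by omega), if_pos (show (0:ℤ) ≤ k by omega)]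
  have hposI : 0 < c (i - 1).toNat := lt_of_le_of_ne (h0 _) (Ne.symm hI)
  have hposK : 0 < c (k + 1).toNat := lt_of_le_of_ne (h0 _) (Ne.symm hK)
  set d := (k - i).toNat with hd
  have e1 : (k + 1).toNat = (i - 1).toNat + d + 2 := by omega
  have e2 : i.toNat = (i - 1).toNat + 1 := by omega
  have e3 : k.toNat = (i - 1).toNat + d + 1 := by omega
  rw [e1] at hposK ⊢
  rw [e2, e3]
  exact natKey c h0 hlc hniz d _ hposI hposK

noncomputable def hh (a b : ℤ → ℝ) (j i k : ℤ) : ℝ :=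
  (a i * a k - a (i - 1) * a (k + 1)) * (b (j - i) * b (j - k))

lemma hh_pair (a b : ℤ → ℝ) (j : ℤ)
    (hb0 : ∀ n, 0 ≤ b n)
    (haK : ∀ i k : ℤ, i ≤ k → a (i - 1) * a (k + 1) ≤ a i * a k)
    (hbK : ∀ i k : ℤ, i ≤ k → b (i - 1) * b (k + 1) ≤ b i * b k) :
    ∀ i k : ℤ, 0 ≤ hh a b j i k + hh a b j (k + 1) (i - 1) := by
  have main : ∀ i k : ℤ, i ≤ k → 0 ≤ hh a b j i k + hh a b j (k + 1) (i - 1) := by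
    intro i k hik
    unfold hh
    rw [show (k + 1 : ℤ) - 1 = k by ring, show (i - 1 : ℤ) + 1 = i by ring,
        show j - (k + 1) = j - k - 1 by ring, show j - (i - 1) = j - i + 1 by ring]
    have h1 : a (i - 1) * a (k + 1) ≤ a i * a k := haK i k hik
    have h2 : b (j - k - 1) * b (j - i + 1) ≤ b (j - k) * b (j - i) := by
      have h := hbK (j - k) (j - i) (by omega)
      rw [show (j - k : ℤ) - 1 = j - k - 1 by ring, show (j - i : ℤ) + 1 = j - i + 1 by ring] at h
      exact h
    have h3 : 0 ≤ b (j - k - 1) * b (j - i + 1) := mul_nonneg (hb0 _) (hb0 _)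
    nlinarith [h1, h2, h3]
  intro i k
  rcases lt_trichotomy i (k + 1) with h | h | h
  · exact main i k (by omega)
  · subst h
    unfold hh
    rw [show (k + 1 : ℤ) - 1 = k by ring]
    ring_nf
    exact le_refl 0
  · have h' := main (k + 1) (i - 1) (by omega)
    rw [show (i - 1 : ℤ) + 1 = i by ring, show (k + 1 : ℤ) - 1 = k by ring] at h'
    linarith

lemma conv_lemma (a b : ℤ → ℝ) (N : ℕ)
    (ha0 : ∀ n, 0 ≤ a n) (hb0 : ∀ n, 0 ≤ b n)
    (haK : ∀ i k : ℤ, i ≤ k → a (i - 1) * a (k + 1) ≤ a i * a k)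
    (hbK : ∀ i k : ℤ, i ≤ k → b (i - 1) * b (k + 1) ≤ b i * b k)
    (haS : ∀ n : ℤ, n < 0 ∨ (N : ℤ) < n → a n = 0)
    (hbS : ∀ n : ℤ, n < 0 ∨ (N : ℤ) < n → b n = 0)
    (j R : ℤ) (hR : (N : ℤ) + |j| + 5 ≤ R) :
    (∑ i ∈ Icc (-R) R, a i * b (j - 1 - i)) * (∑ i ∈ Icc (-R) R, a i * b (j + 1 - i))
      ≤ (∑ i ∈ Icc (-R) R, a i * b (j - i)) ^ 2 := by
  obtain ⟨t, ht1, ht2, hR'⟩ : ∃ t : ℤ, -t ≤ j ∧ j ≤ t ∧ (N : ℤ) + t + 5 ≤ R :=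
    ⟨|j|, neg_abs_le j, le_abs_self j, hR⟩
  clear hR
  have hsupp : ∀ i k : ℤ, ¬(j - N ≤ i ∧ i ≤ j ∧ j - N ≤ k ∧ k ≤ j) →
      hh a b j i k = 0 := by
    intro i k hcon
    unfold hh
    by_cases h1 : j - N ≤ i ∧ i ≤ j
    · rw [hbS (j - k) (by omega)]; ring
    · rw [hbS (j - i) (by omega)]; ring
  have hg1 : ∀ n : ℤ, n ∉ Icc (-R + 2) (R - 2) → a (n - 1) * b (j - n) = 0 := by
    intro n hn
    rw [Finset.mem_Icc] at hn
    rw [haS (n - 1) (by omega), zero_mul]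
  have hg2 : ∀ n : ℤ, n ∉ Icc (-R + 2) (R - 2) → a (n + 1) * b (j - n) = 0 := by
    intro n hn
    rw [Finset.mem_Icc] at hn
    rw [haS (n + 1) (by omega), zero_mul]
  have step1 : ∑ i ∈ Icc (-R) R, a i * b (j - 1 - i)
      = ∑ i ∈ Icc (-R) R, a (i - 1) * b (j - i) := by
    have hmap : ∑ i ∈ Icc (-R) R, a i * b (j - 1 - i)
        = ∑ i ∈ Icc (-R + 1) (R + 1), a (i - 1) * b (j - i) := by
      rw [← Finset.map_add_right_Icc (-R) R 1, Finset.sum_map]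
      apply Finset.sum_congr rfl
      intro i _
      simp only [addRightEmbedding_apply]
      rw [show (i + 1 : ℤ) - 1 = i by ring, show j - (i + 1) = j - 1 - i by ring]
    rw [hmap]
    exact sum_eq_of_support' _ (Icc (-R + 2) (R - 2)) _ _
      (Finset.Icc_subset_Icc (by omega) (by omega))
      (Finset.Icc_subset_Icc (by omega) (by omega)) hg1
  have step2 : ∑ i ∈ Icc (-R) R, a i * b (j + 1 - i)
      = ∑ i ∈ Icc (-R) R, a (i + 1) * b (j - i) := by
    have hmap : ∑ i ∈ Icc (-R) R, a i * b (j + 1 - i)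
        = ∑ i ∈ Icc (-R - 1) (R - 1), a (i + 1) * b (j - i) := by
      rw [show (-R - 1 : ℤ) = -R + (-1) by ring, show (R - 1 : ℤ) = R + (-1) by ring,
          ← Finset.map_add_right_Icc (-R) R (-1), Finset.sum_map]
      apply Finset.sum_congr rfl
      intro i _
      simp only [addRightEmbedding_apply]
      rw [show (i + (-1) : ℤ) + 1 = i by ring, show j - (i + (-1)) = j + 1 - i by ring]
    rw [hmap]
    exact sum_eq_of_support' _ (Icc (-R + 2) (R - 2)) _ _
      (Finset.Icc_subset_Icc (by omega) (by omega))
      (Finset.Icc_subset_Icc (by omega) (by omega)) hg2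
  have exp1 : (∑ i ∈ Icc (-R) R, a i * b (j - i)) ^ 2
      = ∑ p ∈ (Icc (-R) R) ×ˢ (Icc (-R) R),
          (a p.1 * b (j - p.1)) * (a p.2 * b (j - p.2)) := by
    rw [sq, Finset.sum_mul_sum, Finset.sum_product]
  have exp2 : (∑ i ∈ Icc (-R) R, a (i - 1) * b (j - i))
        * (∑ i ∈ Icc (-R) R, a (i + 1) * b (j - i))
      = ∑ p ∈ (Icc (-R) R) ×ˢ (Icc (-R) R),
          (a (p.1 - 1) * b (j - p.1)) * (a (p.2 + 1) * b (j - p.2)) := by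
    rw [Finset.sum_mul_sum, Finset.sum_product]
  have diff : (∑ i ∈ Icc (-R) R, a i * b (j - i)) ^ 2
      - (∑ i ∈ Icc (-R) R, a (i - 1) * b (j - i))
        * (∑ i ∈ Icc (-R) R, a (i + 1) * b (j - i))
      = ∑ p ∈ (Icc (-R) R) ×ˢ (Icc (-R) R), hh a b j p.1 p.2 := by
    rw [exp1, exp2, ← Finset.sum_sub_distrib]
    apply Finset.sum_congr rfl
    intro p _
    unfold hh; ring
  have hW2 : ∀ p : ℤ × ℤ, p ∉ (Icc (j - N) j) ×ˢ (Icc (j - N) j) →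
      hh a b j p.1 p.2 = 0 := by
    intro p hp
    rw [Finset.mem_product, Finset.mem_Icc, Finset.mem_Icc] at hp
    exact hsupp p.1 p.2 (by omega)
  have step4 : ∑ p ∈ (Icc (-R) R) ×ˢ (Icc (-R) R), hh a b j (p.2 + 1) (p.1 - 1)
      = ∑ p ∈ (Icc (-R) R) ×ˢ (Icc (-R) R), hh a b j p.1 p.2 := by
    have h1 : ∑ p ∈ (Icc (-R) R) ×ˢ (Icc (-R) R), hh a b j (p.2 + 1) (p.1 - 1)
        = ∑ p ∈ (Icc (-R + 1) (R + 1)) ×ˢ (Icc (-R - 1) (R - 1)), hh a b j p.1 p.2 := by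
      apply Finset.sum_nbij' (i := fun p : ℤ × ℤ => (p.2 + 1, p.1 - 1))
        (j := fun p : ℤ × ℤ => (p.2 + 1, p.1 - 1))
      · intro p hp
        obtain ⟨x, y⟩ := p
        simp only [Finset.mem_product, Finset.mem_Icc] at *
        omega
      · intro p hp
        obtain ⟨x, y⟩ := p
        simp only [Finset.mem_product, Finset.mem_Icc] at *
        omega
      · intro p _
        obtain ⟨x, y⟩ := p
        simp only [Prod.mk.injEq]
        constructor <;> ring
      · intro p _
        obtain ⟨x, y⟩ := p
        simp only [Prod.mk.injEq]
        constructor <;> ring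
      · intro p _
        rfl
    have h2 : ∑ p ∈ (Icc (-R + 1) (R + 1)) ×ˢ (Icc (-R - 1) (R - 1)), hh a b j p.1 p.2
        = ∑ p ∈ (Icc (-R) R) ×ˢ (Icc (-R) R), hh a b j p.1 p.2 :=
      sum_eq_of_support' _ ((Icc (j - N) j) ×ˢ (Icc (j - N) j)) _ _
        (Finset.product_subset_product (Finset.Icc_subset_Icc (by omega) (by omega))
          (Finset.Icc_subset_Icc (by omega) (by omega)))
        (Finset.product_subset_product (Finset.Icc_subset_Icc (by omega) (by omega))
          (Finset.Icc_subset_Icc (by omega) (by omega))) hW2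
    rw [h1, h2]
  have DD := Finset.sum_nonneg (s := (Icc (-R) R) ×ˢ (Icc (-R) R))
    (f := fun p : ℤ × ℤ => hh a b j p.1 p.2 + hh a b j (p.2 + 1) (p.1 - 1))
    (fun p _ => hh_pair a b j hb0 haK hbK p.1 p.2)
  rw [Finset.sum_add_distrib, step4] at DD
  rw [step1, step2]
  linarith [diff, DD]

theorem log_concave_coeffs_of_product (p q : Polynomial ℝ)
    (hp0 : ∀ j, 0 ≤ p.coeff j) (hq0 : ∀ j, 0 ≤ q.coeff j)
    (hplc : ∀ j : ℕ, 1 ≤ j → p.coeff (j - 1) * p.coeff (j + 1) ≤ (p.coeff j) ^ 2)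
    (hqlc : ∀ j : ℕ, 1 ≤ j → q.coeff (j - 1) * q.coeff (j + 1) ≤ (q.coeff j) ^ 2)
    (hpniz : ∀ i j k : ℕ, i ≤ j → j ≤ k → 0 < p.coeff i → 0 < p.coeff k → 0 < p.coeff j)
    (hqniz : ∀ i j k : ℕ, i ≤ j → j ≤ k → 0 < q.coeff i → 0 < q.coeff k → 0 < q.coeff j) :
    ∀ j : ℕ, 1 ≤ j →
      (p * q).coeff (j - 1) * (p * q).coeff (j + 1) ≤ ((p * q).coeff j) ^ 2 := by
  intro j hj
  set N := max p.natDegree q.natDegree with hN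
  set R : ℤ := (N : ℤ) + |(j : ℤ)| + 5 with hRdef
  set a : ℤ → ℝ := fun n => if 0 ≤ n then p.coeff n.toNat else 0 with ha_def
  set b : ℤ → ℝ := fun n => if 0 ≤ n then q.coeff n.toNat else 0 with hb_def
  have hjabs : |(j : ℤ)| = (j : ℤ) := abs_of_nonneg (by positivity)
  have hR5 : R = (N : ℤ) + (j : ℤ) + 5 := by rw [hRdef, hjabs]
  have ha0 : ∀ n, 0 ≤ a n := by
    intro n; simp only [ha_def]; split
    · exact hp0 _
    · exact le_refl 0
  have hb0 : ∀ n, 0 ≤ b n := by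
    intro n; simp only [hb_def]; split
    · exact hq0 _
    · exact le_refl 0
  have haK : ∀ i k : ℤ, i ≤ k → a (i - 1) * a (k + 1) ≤ a i * a k := by
    intro i k hik; simp only [ha_def]; exact intKey p.coeff hp0 hplc hpniz i k hik
  have hbK : ∀ i k : ℤ, i ≤ k → b (i - 1) * b (k + 1) ≤ b i * b k := by
    intro i k hik; simp only [hb_def]; exact intKey q.coeff hq0 hqlc hqniz i k hik
  have haS : ∀ n : ℤ, n < 0 ∨ (N : ℤ) < n → a n = 0 := by
    intro n hn
    simp only [ha_def]
    rcases hn with h | h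
    · rw [if_neg (by omega)]
    · rw [if_pos (by omega)]
      apply Polynomial.coeff_eq_zero_of_natDegree_lt
      have h1 : p.natDegree ≤ N := le_max_left _ _
      omega
  have hbS : ∀ n : ℤ, n < 0 ∨ (N : ℤ) < n → b n = 0 := by
    intro n hn
    simp only [hb_def]
    rcases hn with h | h
    · rw [if_neg (by omega)]
    · rw [if_pos (by omega)]
      apply Polynomial.coeff_eq_zero_of_natDegree_lt
      have h1 : q.natDegree ≤ N := le_max_right _ _
      omega
  have hcoeff : ∀ m : ℕ, (m : ℤ) ≤ R →
      (p * q).coeff m = ∑ i ∈ Icc (-R) R, a i * b ((m : ℤ) - i) := by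
    intro m hm
    have hR0 : (0 : ℤ) ≤ R := by
      have := abs_nonneg (j : ℤ); omega
    have hvan : ∀ n : ℤ, n ∉ Icc (0 : ℤ) (m : ℤ) → a n * b ((m : ℤ) - n) = 0 := by
      intro n hn
      rw [Finset.mem_Icc] at hn
      simp only [ha_def, hb_def]
      by_cases h : 0 ≤ n
      · rw [if_neg (show ¬ (0 ≤ (m : ℤ) - n) by omega), mul_zero]
      · rw [if_neg h, zero_mul]
    have hres : ∑ i ∈ Icc (-R) R, a i * b ((m : ℤ) - i)
        = ∑ i ∈ Icc (0 : ℤ) (m : ℤ), a i * b ((m : ℤ) - i) :=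
      sum_eq_of_support' _ (Icc (0 : ℤ) (m : ℤ)) _ _
        (Finset.Icc_subset_Icc (by omega) (by omega)) Finset.Subset.rfl hvan
    rw [hres, Polynomial.coeff_mul, Finset.Nat.sum_antidiagonal_eq_sum_range_succ_mk]
    apply Finset.sum_nbij' (i := fun k : ℕ => (k : ℤ)) (j := Int.toNat)
    · intro k hk
      rw [Finset.mem_range] at hk
      rw [Finset.mem_Icc]
      omega
    · intro n hn
      rw [Finset.mem_Icc] at hn
      rw [Finset.mem_range]
      omega
    · intro k _
      omega
    · intro n hn
      rw [Finset.mem_Icc] at hn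
      omega
    · intro k hk
      rw [Finset.mem_range] at hk
      simp only [ha_def, hb_def]
      rw [if_pos (by omega : (0:ℤ) ≤ (k:ℤ)), if_pos (by omega : (0:ℤ) ≤ (m:ℤ) - (k:ℤ))]
      rw [show ((k : ℤ)).toNat = k by omega, show ((m : ℤ) - (k : ℤ)).toNat = m - k by omega]
  have key := conv_lemma a b N ha0 hb0 haK hbK haS hbS (j : ℤ) R (le_of_eq hRdef.symm)
  have e1 : ((j - 1 : ℕ) : ℤ) = (j : ℤ) - 1 := by omega
  have e2 : ((j + 1 : ℕ) : ℤ) = (j : ℤ) + 1 := by omega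
  rw [hcoeff (j - 1) (by omega), hcoeff (j + 1) (by omega), hcoeff j (by omega),
      e1, e2]
  exact key
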